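/- arXiv:2104.10734 — 3 statements merged into one kernel-verified Lean document; each statement's English description precedes it below -/
import Mathlib

section
/- If a digraph D has the property that between any two vertices there is a unique oriented simple path, then no two distinct simple oriented cycles of D share an edge. -/
/-- The list of directed edges traversed by the cyclic sequence of vertices `l`
(consecutive pairs, including the closing pair from the last to the first vertex). -/
def cyclicPairs {V : Type*} (l : List V) : List (V × V) := l.zip (l.rotate 1)

/-- `l` is an Eulerian tour of the digraph with edge set `E`: the cyclically consecutive
pairs of `l` are pairwise distinct and are exactly the edges of `E`. -/
def IsEulerTour {V : Type*} [DecidableEq V] (E : Finset (V × V)) (l : List V) : Prop :=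
  l ≠ [] ∧ (cyclicPairs l).Nodup ∧ (cyclicPairs l).toFinset = E

/-- The digraph with edge set `E` has exactly one Eulerian tour up to cyclic shift. -/
def UniqueEulerTour {V : Type*} [DecidableEq V] (E : Finset (V × V)) : Prop :=
  ∃ l, IsEulerTour E l ∧ ∀ l', IsEulerTour E l' → l'.IsRotated l

def Loopless {V : Type*} (E : Finset (V × V)) : Prop := ∀ e ∈ E, e.1 ≠ e.2

def NoIsolated {V : Type*} (E : Finset (V × V)) : Prop :=
  ∀ v : V, ∃ e ∈ E, e.1 = v ∨ e.2 = v

def outdeg {V : Type*} [DecidableEq V] (E : Finset (V × V)) (v : V) : ℕ :=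
  (E.filter (fun p => p.1 = v)).card

def indeg {V : Type*} [DecidableEq V] (E : Finset (V × V)) (v : V) : ℕ :=
  (E.filter (fun p => p.2 = v)).card

/-- `l` is an oriented simple path from `u` to `v` using edges of `E`. -/
def IsPathIn {V : Type*} (E : Finset (V × V)) (u v : V) (l : List V) : Prop :=
  l.Chain' (fun a b => (a, b) ∈ E) ∧ l.head? = some u ∧ l.getLast? = some v ∧ l.Nodup

/-- `l` (read cyclically) is a simple oriented cycle of the digraph `E`. -/
def IsSimpleCycleList {V : Type*} (E : Finset (V × V)) (l : List V) : Prop :=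
  l ≠ [] ∧ l.Nodup ∧ ∀ p ∈ cyclicPairs l, p ∈ E

private lemma zip_rotate_one {α β : Type*} : ∀ (l : List α) (l' : List β),
    l.length = l'.length → (l.rotate 1).zip (l'.rotate 1) = (l.zip l').rotate 1
  | [], [], _ => by simp
  | (a :: l), (b :: l'), h => by
    simp only [List.length_cons, Nat.succ_inj] at h
    simp [List.rotate_cons_succ, List.zip_append h]

private lemma zip_rotate {α β : Type*} (n : ℕ) : ∀ (l : List α) (l' : List β),
    l.length = l'.length → (l.rotate n).zip (l'.rotate n) = (l.zip l').rotate n := by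
  induction n with
  | zero => simp
  | succ n ih =>
    intro l l' h
    have h1 : l.rotate (n + 1) = (l.rotate 1).rotate n := by
      rw [List.rotate_rotate, Nat.add_comm]
    have h1' : l'.rotate (n + 1) = (l'.rotate 1).rotate n := by
      rw [List.rotate_rotate, Nat.add_comm]
    rw [h1, h1', ih _ _ (by simp [h]), zip_rotate_one _ _ h, List.rotate_rotate, Nat.add_comm]

private lemma cyclicPairs_rotate {V : Type*} (l : List V) (n : ℕ) :
    cyclicPairs (l.rotate n) = (cyclicPairs l).rotate n := by
  unfold cyclicPairs
  have h : (l.rotate n).rotate 1 = (l.rotate 1).rotate n := by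
    rw [List.rotate_rotate, List.rotate_rotate, Nat.add_comm]
  rw [h, zip_rotate n l (l.rotate 1) (by simp)]

private lemma length_cyclicPairs {V : Type*} (l : List V) :
    (cyclicPairs l).length = l.length := by
  simp [cyclicPairs]

private lemma getElem_cyclicPairs {V : Type*} (l : List V) (i : ℕ)
    (h : i < (cyclicPairs l).length) :
    (cyclicPairs l)[i] = (l[i]'(by rw [length_cyclicPairs] at h; exact h),
      l[(i + 1) % l.length]'(Nat.mod_lt _ (by rw [length_cyclicPairs] at h; omega))) := by
  have h' : i < l.length := by rw [length_cyclicPairs] at h; exact h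
  simp only [cyclicPairs, List.getElem_zip, List.getElem_rotate]

private lemma cycle_to_path {V : Type*} (E : Finset (V × V)) (L : List V) (a b : V)
    (hc : IsSimpleCycleList E L) (he : (a, b) ∈ cyclicPairs L) :
    ∃ n, IsPathIn E b a (L.rotate n) := by
  obtain ⟨hne, hnd, hE⟩ := hc
  have hlen : 0 < L.length := List.length_pos_iff.2 hne
  obtain ⟨i, hi, hgi⟩ := List.mem_iff_getElem.1 he
  rw [getElem_cyclicPairs] at hgi
  have hi' : i < L.length := by rw [length_cyclicPairs] at hi; exact hi
  have ha : L[i] = a := congrArg Prod.fst hgi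
  have hb : L[(i + 1) % L.length]'(Nat.mod_lt _ hlen) = b := congrArg Prod.snd hgi
  set n := (i + 1) % L.length with hn
  have hnlt : n < L.length := Nat.mod_lt _ hlen
  refine ⟨n, ?_, ?_, ?_, List.nodup_rotate.2 hnd⟩
  · -- Chain'
    rw [show List.Chain' (fun a b => (a, b) ∈ E) (L.rotate n) = List.IsChain _ _ from rfl,
      List.isChain_iff_getElem]
    intro j hj
    simp only [List.length_rotate] at hj
    apply hE
    have hjlt : j < (cyclicPairs (L.rotate n)).length := by
      rw [length_cyclicPairs, List.length_rotate]; omega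
    have hmem : (cyclicPairs (L.rotate n))[j] ∈ cyclicPairs (L.rotate n) :=
      List.getElem_mem _
    rw [getElem_cyclicPairs] at hmem
    have hjmod : (j + 1) % (L.rotate n).length = j + 1 := by
      rw [List.length_rotate]; exact Nat.mod_eq_of_lt (by omega)
    simp only [cyclicPairs_rotate, List.mem_rotate] at hmem
    convert hmem using 3
    exact hjmod.symm
  · -- head
    have h0 : 0 < (L.rotate n).length := by simpa using hlen
    rw [List.head?_eq_getElem?, List.getElem?_eq_getElem h0, List.getElem_rotate]
    have : (0 + n) % L.length = n := by rw [Nat.zero_add]; exact Nat.mod_eq_of_lt hnlt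
    simp only [this]
    exact congrArg some hb
  · -- last
    have h0 : (L.rotate n).length - 1 < (L.rotate n).length := by
      rw [List.length_rotate]; omega
    rw [List.getLast?_eq_getElem?, List.getElem?_eq_getElem h0, List.getElem_rotate]
    have hkey : ((L.rotate n).length - 1 + n) % L.length = i := by
      rw [List.length_rotate, hn]
      by_cases hcase : i + 1 = L.length
      · have : (i + 1) % L.length = 0 := by rw [hcase, Nat.mod_self]
        rw [this, Nat.add_zero, Nat.mod_eq_of_lt (by omega)]
        omega
      · have : (i + 1) % L.length = i + 1 := Nat.mod_eq_of_lt (by omega)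
        rw [this]
        have h2 : L.length - 1 + (i + 1) = L.length + i := by omega
        rw [h2, Nat.add_mod_left, Nat.mod_eq_of_lt hi']
    simp only [hkey]
    exact congrArg some ha

/-- If between any two vertices there is a unique oriented simple path, then two simple
oriented cycles sharing an edge have the same edge set (no two distinct cycles share an
edge). -/
theorem unique_path_cycles_edge_disjoint {V : Type*} [DecidableEq V]
    (E : Finset (V × V))
    (hpath : ∀ u v : V, ∃! l : List V, IsPathIn E u v l)
    (c₁ c₂ : List V) (h₁ : IsSimpleCycleList E c₁) (h₂ : IsSimpleCycleList E c₂)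
    (e : V × V) (he₁ : e ∈ cyclicPairs c₁) (he₂ : e ∈ cyclicPairs c₂) :
    (cyclicPairs c₁).toFinset = (cyclicPairs c₂).toFinset := by
  obtain ⟨a, b⟩ := e
  obtain ⟨n₁, hp₁⟩ := cycle_to_path E c₁ a b h₁ he₁
  obtain ⟨n₂, hp₂⟩ := cycle_to_path E c₂ a b h₂ he₂
  obtain ⟨l, -, hu⟩ := hpath b a
  have heq : c₁.rotate n₁ = c₂.rotate n₂ := by rw [hu _ hp₁, hu _ hp₂]
  have p1 : (cyclicPairs (c₁.rotate n₁)).toFinset = (cyclicPairs c₁).toFinset := by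
    ext p; simp [cyclicPairs_rotate, List.mem_rotate]
  have p2 : (cyclicPairs (c₂.rotate n₂)).toFinset = (cyclicPairs c₂).toFinset := by
    ext p; simp [cyclicPairs_rotate, List.mem_rotate]
  rw [← p1, ← p2, heq]
end

section
/- In a loopless digraph with exactly one Eulerian tour up to cyclic shift, no two distinct simple oriented cycles have an edge in common. -/
set_option linter.unusedSectionVars false in
section
namespace EUaux
open List

variable {V : Type*}

theorem getElem_congr {α : Type*} (l : List α) (i j : ℕ) (e : i = j) (h : i < l.length) :
    l[i] = l[j]'(e ▸ h) := by subst e; rfl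

theorem cp_length (l : List V) : (cyclicPairs l).length = l.length := by
  simp [cyclicPairs]

theorem cp_getElem (l : List V) (i : ℕ) (h : i < l.length) :
    (cyclicPairs l)[i]'(by rw [cp_length]; exact h) = (l[i], l[(i+1) % l.length]'(Nat.mod_lt _ (by omega))) := by
  have h2 : i < (l.rotate 1).length := by simpa using h
  simp only [cyclicPairs, List.getElem_zip, List.getElem_rotate]

theorem cp_rotate (l : List V) (n : ℕ) :
    cyclicPairs (l.rotate n) = (cyclicPairs l).rotate n := by
  rcases eq_or_ne l [] with rfl | hl
  · simp [cyclicPairs]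
  have hL : 0 < l.length := List.length_pos_iff.2 hl
  apply List.ext_getElem
  · simp [cp_length]
  intro i h1 h2
  rw [cp_length, List.length_rotate] at h1
  rw [List.getElem_rotate]
  have e1 := cp_getElem (l.rotate n) i (by simpa using h1)
  rw [e1]
  rw [getElem_congr _ _ ((i+n) % (cyclicPairs l).length) (by rw [cp_length]) (by rw [cp_length]; exact Nat.mod_lt _ hL) |>.symm]
  rw [cp_getElem l ((i+n) % l.length) (Nat.mod_lt _ hL)]
  simp only [Prod.mk.injEq, List.length_rotate]
  constructor
  · rw [List.getElem_rotate]
  · rw [List.getElem_rotate]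
    apply getElem_congr
    rw [Nat.mod_add_mod, Nat.mod_add_mod, Nat.add_right_comm]

theorem cp_chain' (l : List V) : (cyclicPairs l).Chain' (fun a b => a.2 = b.1) := by
  show List.IsChain _ _
  rw [List.isChain_iff_getElem]
  intro i h
  rw [cp_length] at h
  rw [cp_getElem l i (by omega), cp_getElem l (i+1) (by omega)]
  simp only
  apply getElem_congr
  rw [Nat.mod_eq_of_lt (by omega)]

theorem cp_ne_nil {l : List V} (hl : l ≠ []) : cyclicPairs l ≠ [] := by
  intro h
  apply hl
  have := cp_length l
  rw [h] at this
  exact List.length_eq_zero_iff.mp this.symm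

theorem cp_wrap (l : List V) (hl : l ≠ []) :
    ((cyclicPairs l).getLast (cp_ne_nil hl)).2 = ((cyclicPairs l).head (cp_ne_nil hl)).1 := by
  have hL : 0 < l.length := List.length_pos_iff.2 hl
  rw [List.getLast_eq_getElem, List.head_eq_getElem]
  rw [getElem_congr _ _ (l.length - 1) (by rw [cp_length]) (by rw [cp_length]; omega)]
  rw [getElem_congr _ 0 0 rfl (by rw [cp_length]; omega)]
  rw [cp_getElem l (l.length - 1) (by omega), cp_getElem l 0 hL]
  simp only
  apply getElem_congr
  have : l.length - 1 + 1 = l.length := by omega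
  rw [this, Nat.mod_self]

theorem cp_map_fst (l : List V) : (cyclicPairs l).map Prod.fst = l :=
  List.map_fst_zip (by simp)

theorem cp_map_snd (l : List V) : (cyclicPairs l).map Prod.snd = l.rotate 1 :=
  List.map_snd_zip (by simp)

variable [DecidableEq V]

/-- Cyclic edge word formulation of an Euler tour. -/
def EulerWord (E : Finset (V × V)) (W : List (V × V)) : Prop :=
  W ≠ [] ∧ W.Nodup ∧ W.toFinset = E ∧ W.Chain' (fun a b => a.2 = b.1) ∧
    ∀ (h : W ≠ []), (W.getLast h).2 = (W.head h).1

theorem EW_of_tour {E : Finset (V × V)} {l : List V} (h : IsEulerTour E l) :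
    EulerWord E (cyclicPairs l) :=
  ⟨cp_ne_nil h.1, h.2.1, h.2.2, cp_chain' l, fun _ => cp_wrap l h.1⟩

theorem cp_map_fst_of_EW {E : Finset (V × V)} {W : List (V × V)} (h : EulerWord E W) :
    cyclicPairs (W.map Prod.fst) = W := by
  obtain ⟨hne, hnd, hfin, hch, hwr⟩ := h
  have hL : 0 < W.length := List.length_pos_iff.2 hne
  apply List.ext_getElem
  · simp [cp_length]
  intro i h1 h2
  rw [cp_length, List.length_map] at h1
  rw [cp_getElem _ i (by simpa using h1)]
  simp only [List.length_map, List.getElem_map]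
  rw [Prod.mk.injEq]
  refine ⟨rfl, ?_⟩
  rcases Nat.lt_or_ge (i+1) W.length with hlt | hge
  · rw [getElem_congr W _ (i+1) (Nat.mod_eq_of_lt hlt) (Nat.mod_lt _ hL)]
    have := List.isChain_iff_getElem.1 hch i (by omega)
    exact this.symm
  · have hi1 : (i+1) % W.length = 0 := by
      have : i + 1 = W.length := by omega
      rw [this, Nat.mod_self]
    rw [getElem_congr W _ 0 hi1 (Nat.mod_lt _ hL)]
    have hw := hwr hne
    rw [List.getLast_eq_getElem, List.head_eq_getElem] at hw
    rw [getElem_congr W i (W.length - 1) (by omega) h2]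
    exact hw.symm

theorem tour_of_EW {E : Finset (V × V)} {W : List (V × V)} (h : EulerWord E W) :
    IsEulerTour E (W.map Prod.fst) := by
  refine ⟨by simp [h.1], ?_, ?_⟩ <;> rw [cp_map_fst_of_EW h]
  · exact h.2.1
  · exact h.2.2.1

theorem perm_toFinset {α : Type*} [DecidableEq α] {l l' : List α} (h : l.Perm l') :
    l.toFinset = l'.toFinset := by
  ext a; simp [List.mem_toFinset, h.mem_iff]

theorem tour_rotate {E : Finset (V × V)} {l : List V} (h : IsEulerTour E l) (n : ℕ) :
    IsEulerTour E (l.rotate n) := by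
  refine ⟨by simp [List.rotate_eq_nil_iff, h.1], ?_, ?_⟩ <;> rw [cp_rotate]
  · exact List.nodup_rotate.2 h.2.1
  · rw [perm_toFinset (List.rotate_perm _ _), h.2.2]

/-- Any two Euler words are rotations of each other. -/
theorem EW_isRotated {E : Finset (V × V)} (hu : UniqueEulerTour E)
    {W W' : List (V × V)} (h : EulerWord E W) (h' : EulerWord E W') :
    ∃ n, W.rotate n = W' := by
  obtain ⟨l₀, hl₀, huniq⟩ := hu
  have t1 := tour_of_EW h
  have t2 := tour_of_EW h'
  have r1 := huniq _ t1
  have r2 := huniq _ t2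
  obtain ⟨n, hn⟩ := (r1.trans r2.symm)
  refine ⟨n, ?_⟩
  have := congrArg cyclicPairs hn
  rw [cp_rotate] at this
  rw [cp_map_fst_of_EW h, cp_map_fst_of_EW h'] at this
  exact this

/-- Junction condition between consecutive segments. -/
def Jn (A B : List (V × V)) : Prop := ∀ a ∈ A.getLast?, ∀ b ∈ B.head?, a.2 = b.1

theorem jn_iff {A B : List (V × V)} (hA : A ≠ []) (hB : B ≠ []) :
    Jn A B ↔ (A.getLast hA).2 = (B.head hB).1 := by
  simp [Jn, List.getLast?_eq_getLast hA, List.head?_eq_head hB]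

theorem chain'_app {A B : List (V × V)} :
    List.Chain' (fun a b => a.2 = b.1) (A ++ B) ↔
      List.Chain' (fun a b => a.2 = b.1) A ∧ List.Chain' (fun a b => a.2 = b.1) B ∧ Jn A B :=
  List.isChain_append

theorem head_app_left {A B : List (V × V)} (hA : A ≠ []) (h : A ++ B ≠ []) :
    (A ++ B).head h = A.head hA := by
  have := List.head?_append_of_ne_nil A (l₂ := B) hA
  rw [List.head?_eq_head h, List.head?_eq_head hA] at this
  exact Option.some_injective _ this

theorem getLast_app_right {A B : List (V × V)} (hB : B ≠ []) (h : A ++ B ≠ []) :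
    (A ++ B).getLast h = B.getLast hB := by
  have := List.getLast?_append_of_ne_nil A (l₂ := B) hB
  rw [List.getLast?_eq_getLast h, List.getLast?_eq_getLast hB] at this
  exact Option.some_injective _ this

theorem swap_lemma {E : Finset (V × V)} (hu : UniqueEulerTour E)
    {P Q R S : List (V × V)} (hP : P ≠ []) (hQ : Q ≠ []) (hR : R ≠ []) (hS : S ≠ [])
    (hEW : EulerWord E (P ++ (Q ++ (R ++ S))))
    (hPR : (P.head hP).1 = (R.head hR).1)
    (hQS : (Q.head hQ).1 = (S.head hS).1) : False := by
  obtain ⟨hne, hnd, hfin, hch, hwr⟩ := hEW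
  have hQRS : Q ++ (R ++ S) ≠ [] := by simp [hQ]
  have hRS : R ++ S ≠ [] := by simp [hR]
  obtain ⟨cP, hch1, jP⟩ := chain'_app.1 hch
  obtain ⟨cQ, hch2, jQ⟩ := chain'_app.1 hch1
  obtain ⟨cR, cS, jR⟩ := chain'_app.1 hch2
  have jPQ : (P.getLast hP).2 = (Q.head hQ).1 := by
    have := (jn_iff hP hQRS).1 jP
    rwa [head_app_left hQ] at this
  have jQR : (Q.getLast hQ).2 = (R.head hR).1 := by
    have := (jn_iff hQ hRS).1 jQ
    rwa [head_app_left hR] at this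
  have jRS : (R.getLast hR).2 = (S.head hS).1 := (jn_iff hR hS).1 jR
  have hlast : (P ++ (Q ++ (R ++ S))).getLast hne = S.getLast hS := by
    rw [getLast_app_right hQRS, getLast_app_right hRS, getLast_app_right hS]
  have hhead : (P ++ (Q ++ (R ++ S))).head hne = P.head hP := head_app_left hP _
  have jSP : (S.getLast hS).2 = (P.head hP).1 := by
    rw [← hlast, ← hhead]; exact hwr hne
  -- the swapped word is also an Euler word
  have hperm : (P ++ (S ++ (R ++ Q))).Perm (P ++ (Q ++ (R ++ S))) := by
    rw [List.perm_iff_count]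
    intro a
    simp only [List.count_append]
    ring
  have hEW' : EulerWord E (P ++ (S ++ (R ++ Q))) := by
    refine ⟨by simp [hP], hperm.nodup_iff.2 hnd, (perm_toFinset hperm).trans hfin, ?_, ?_⟩
    · refine chain'_app.2 ⟨cP, chain'_app.2 ⟨cS, chain'_app.2 ⟨cR, cQ, ?_⟩, ?_⟩, ?_⟩
      · exact (jn_iff hR hQ).2 (by rw [jRS, ← hQS])
      · exact (jn_iff hS (by simp [hR] : R ++ Q ≠ [])).2
          (by rw [head_app_left hR, jSP, hPR])
      · exact (jn_iff hP (by simp [hS] : S ++ (R ++ Q) ≠ [])).2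
          (by rw [head_app_left hS, jPQ, hQS])
    · intro h
      rw [getLast_app_right (by simp [hQ] : S ++ (R ++ Q) ≠ []),
        getLast_app_right (by simp [hQ] : R ++ Q ≠ []), getLast_app_right hQ,
        head_app_left hP, jQR, ← hPR]
  -- it must be a rotation of the original
  obtain ⟨n, hn⟩ := EW_isRotated hu ⟨hne, hnd, hfin, hch, hwr⟩ hEW'
  set W := P ++ (Q ++ (R ++ S)) with hW
  have hL : 0 < W.length := List.length_pos_iff.2 hne
  have hne' : W.rotate n ≠ [] := by rw [hn]; simp [hP]
  have e1 : (W.rotate n).head hne' = W[n % W.length]'(Nat.mod_lt _ hL) := by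
    rw [List.head_eq_getElem, List.getElem_rotate]
    apply getElem_congr
    simp
  have e2 : (W.rotate n).head hne' = P.head hP := by
    have h7 : (W.rotate n).head? = P.head? := by
      rw [hn, List.head?_append_of_ne_nil _ hP]
    rw [List.head?_eq_head hne', List.head?_eq_head hP] at h7
    exact Option.some_injective _ h7
  have e3 : W[n % W.length]'(Nat.mod_lt _ hL) = W[0]'hL := by
    rw [← e1, e2, ← hhead, List.head_eq_getElem]
  have hmod : n % W.length = 0 := by
    have hinj := List.nodup_iff_injective_getElem.1 hnd
    have := hinj (a₁ := ⟨n % W.length, Nat.mod_lt _ hL⟩) (a₂ := ⟨0, hL⟩) e3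
    exact congrArg Fin.val this
  have hWW : P ++ (S ++ (R ++ Q)) = P ++ (Q ++ (R ++ S)) := by
    rw [← hn, ← List.rotate_mod, hmod, List.rotate_zero]
  have hSQ : S ++ (R ++ Q) = Q ++ (R ++ S) := List.append_cancel_left hWW
  have h5 : (S ++ (R ++ Q)).head? = (Q ++ (R ++ S)).head? := congrArg _ hSQ
  rw [List.head?_append_of_ne_nil _ hS, List.head?_append_of_ne_nil _ hQ,
    List.head?_eq_head hS, List.head?_eq_head hQ] at h5
  have h6 : S.head hS = Q.head hQ := Option.some_injective _ h5
  have hnd2 : (Q ++ (R ++ S)).Nodup := (List.nodup_append.1 hnd).2.1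
  have hdisj := (List.nodup_append.1 hnd2).2.2
  exact hdisj _ (List.head_mem hQ) (Q.head hQ)
    (by rw [← h6]; exact List.mem_append_right _ (List.head_mem hS)) rfl

/-- `y` is an internal junction of the segment `M`. -/
def IsJunc (M : List (V × V)) (y : V) : Prop :=
  ∃ (P Q : List (V × V)) (hQ : Q ≠ []), M = P ++ Q ∧ P ≠ [] ∧ (Q.head hQ).1 = y

theorem no_cross {E : Finset (V × V)} (hu : UniqueEulerTour E)
    {M N : List (V × V)} (hM : M ≠ []) (hN : N ≠ [])
    (hEW : EulerWord E (M ++ N))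
    (hx : (M.head hM).1 = (N.head hN).1)
    {y : V} (hyM : IsJunc M y) (hyN : IsJunc N y) : False := by
  obtain ⟨P, Q, hQ, rfl, hP, hPy⟩ := hyM
  obtain ⟨R, S, hS, rfl, hR, hRy⟩ := hyN
  refine swap_lemma hu hP hQ hR hS ((List.append_assoc P Q (R ++ S)) ▸ hEW) ?_ ?_
  · rw [← head_app_left hP (by simp [hP] : P ++ Q ≠ []),
      ← head_app_left hR (by simp [hR] : R ++ S ≠ [])]
    exact hx
  · rw [hPy, hRy]

theorem seg_endpoints {M : List (V × V)} {x : V} (hM : M ≠ [])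
    (hch : M.Chain' (fun a b => a.2 = b.1))
    (hh : (M.head hM).1 = x) (hl : (M.getLast hM).2 = x) :
    ∀ g ∈ M, (g.1 = x ∨ IsJunc M g.1) ∧ (g.2 = x ∨ IsJunc M g.2) := by
  intro g hg
  obtain ⟨P, T, hPT⟩ := List.append_of_mem hg
  constructor
  · rcases eq_or_ne P [] with rfl | hP
    · left
      simp only [List.nil_append] at hPT
      subst hPT
      simpa using hh
    · right
      exact ⟨P, g :: T, by simp, hPT, hP, rfl⟩
  · rcases eq_or_ne T [] with rfl | hT
    · left
      have h2 : M = P ++ [g] := hPT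
      subst h2
      have e : (P ++ [g]).getLast (by simp) = g := List.getLast_concat
      rw [← hl, e]
    · right
      refine ⟨P ++ [g], T, hT, by rw [hPT]; simp, by simp, ?_⟩
      subst hPT
      have hc2 : (g :: T).Chain' (fun a b => a.2 = b.1) := (chain'_app.1 hch).2.1
      cases T with
      | nil => exact absurd rfl hT
      | cons t T' => exact (List.IsChain.rel hc2).symm

theorem all_of_head {α : Type*} {d : List α} {p : α → Prop}
    (h0 : ∀ h : d ≠ [], p (d.head h))
    (hstep : ∀ i (hi : i + 1 < d.length), p (d[i]'(by omega)) → p (d[i+1]'hi)) :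
    ∀ g ∈ d, p g := by
  have key : ∀ i (h : i < d.length), p (d[i]'h) := by
    intro i
    induction i with
    | zero =>
      intro h
      have hne : d ≠ [] := by intro he; rw [he] at h; simp at h
      have := h0 hne
      rwa [List.head_eq_getElem] at this
    | succ n ih =>
      intro h
      exact hstep n h (ih (by omega))
  intro g hg
  obtain ⟨i, h, rfl⟩ := List.getElem_of_mem hg
  exact key i h

theorem cp_mem_fst {c : List V} {g : V × V} (hg : g ∈ cyclicPairs c) : g.1 ∈ c :=
  cp_map_fst c ▸ List.mem_map_of_mem (f := Prod.fst) hg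

theorem cp_mem_snd {c : List V} {g : V × V} (hg : g ∈ cyclicPairs c) : g.2 ∈ c := by
  have := cp_map_snd c ▸ List.mem_map_of_mem (f := Prod.snd) hg
  exact List.mem_rotate.1 this

theorem cp_exists_out {c : List V} {w : V} (hw : w ∈ c) : ∃ g ∈ cyclicPairs c, g.1 = w := by
  rw [← cp_map_fst c] at hw
  obtain ⟨g, hg, he⟩ := List.mem_map.1 hw
  exact ⟨g, hg, he⟩

theorem cp_out_unique {c : List V} (hc : c.Nodup) {g g' : V × V}
    (hg : g ∈ cyclicPairs c) (hg' : g' ∈ cyclicPairs c) (h : g.1 = g'.1) : g = g' := by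
  have hnd : ((cyclicPairs c).map Prod.fst).Nodup := by rw [cp_map_fst]; exact hc
  exact List.inj_on_of_nodup_map hnd hg hg' h

theorem EW_rotate {E : Finset (V × V)} {W : List (V × V)} (h : EulerWord E W) (n : ℕ) :
    EulerWord E (W.rotate n) := by
  have := EW_of_tour (tour_rotate (tour_of_EW h) n)
  rwa [cp_rotate, cp_map_fst_of_EW h] at this

theorem cycle_stays {E : Finset (V × V)} (hu : UniqueEulerTour E)
    {M N : List (V × V)} (hM : M ≠ []) (hN : N ≠ [])
    (hEW : EulerWord E (M ++ N)) (hx : (M.head hM).1 = (N.head hN).1)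
    {c : List V} (hc : IsSimpleCycleList E c)
    {f : V × V} (hf : f ∈ cyclicPairs c) (hfM : f ∈ M) (hfx : f.1 = (M.head hM).1) :
    ∀ g ∈ cyclicPairs c, g ∈ M := by
  obtain ⟨hne, hnd, hfin, hch, hwr⟩ := id hEW
  obtain ⟨cM, hchN, jMN⟩ := chain'_app.1 hch
  have jM : (M.getLast hM).2 = (M.head hM).1 := by
    rw [(jn_iff hM hN).1 jMN, ← hx]
  have jN : (N.getLast hN).2 = (M.head hM).1 := by
    have hw := hwr hne
    rwa [getLast_app_right hN, head_app_left hM] at hw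
  have hsegM := seg_endpoints hM cM rfl jM
  have hsegN := seg_endpoints hN hchN hx.symm jN
  obtain ⟨k, hk, hkf⟩ := List.getElem_of_mem hf
  have hcne := hc.1
  set c' := c.rotate k with hc'def
  have hd : cyclicPairs c' = (cyclicPairs c).rotate k := cp_rotate c k
  have hmemd : ∀ g, g ∈ cyclicPairs c' ↔ g ∈ cyclicPairs c := by
    intro g; rw [hd]; exact List.mem_rotate
  have hc'ne : c' ≠ [] := by simp [hc'def, List.rotate_eq_nil_iff, hcne]
  have hc'pos : 0 < c'.length := List.length_pos_iff.2 hc'ne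
  have hdlen : (cyclicPairs c').length = c'.length := cp_length c'
  have hd0 : ∀ (h : 0 < (cyclicPairs c').length), (cyclicPairs c')[0]'h = f := by
    intro h
    rw [List.getElem_of_eq hd, List.getElem_rotate]
    rw [getElem_congr _ _ k (by simpa using Nat.mod_eq_of_lt hk) (Nat.mod_lt _ (Nat.lt_of_le_of_lt (Nat.zero_le _) hk))]
    exact hkf
  -- the first vertex of c' is the base point
  have hc'0 : ∀ (h : 0 < c'.length), c'[0]'h = f.1 := by
    intro h
    have := cp_getElem c' 0 h
    rw [hd0 (by omega)] at this
    exact (congrArg Prod.fst this).symm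
  have key : ∀ g ∈ cyclicPairs c', g ∈ M := by
    refine all_of_head ?_ ?_
    · intro h
      rw [List.head_eq_getElem, hd0]
      exact hfM
    · intro i hi hgM
      set d := cyclicPairs c' with hddef
      have hchd := cp_chain' c'
      have hrel : (d[i]'(by omega)).2 = (d[i+1]'hi).1 := by
        have := List.isChain_iff_getElem.1 hchd i (by omega)
        simpa using this
      have hi1 : i + 1 < c'.length := by rw [← hdlen]; exact hi
      have hfst : (d[i+1]'hi).1 = c'[i+1]'hi1 := by
        have := cp_getElem c' (i+1) hi1
        rw [getElem_congr d (i+1) (i+1) rfl hi] at this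
        exact congrArg Prod.fst this
      have hne_x : (d[i+1]'hi).1 ≠ f.1 := by
        rw [hfst]
        intro hcon
        rw [← hc'0 hc'pos] at hcon
        have hinj := List.nodup_iff_injective_getElem.1 (List.nodup_rotate.2 hc.2.1 : c'.Nodup)
        have := hinj (a₁ := ⟨i+1, hi1⟩) (a₂ := ⟨0, hc'pos⟩) hcon
        simp at this
      -- the next edge is in E
      have hg'E : (d[i+1]'hi) ∈ E := hc.2.2 _ ((hmemd _).1 (List.getElem_mem hi))
      have hg'MN : (d[i+1]'hi) ∈ M ++ N := by
        rw [← List.mem_toFinset, hfin] at *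
        exact hg'E
      rcases List.mem_append.1 hg'MN with hgM' | hgN'
      · exact hgM'
      · exfalso
        have hne_x2 : (d[i]'(by omega)).2 ≠ f.1 := by rw [hrel]; exact hne_x
        have hjN : IsJunc N (d[i+1]'hi).1 := by
          rcases (hsegN _ hgN').1 with h1 | h1
          · exact absurd (h1.trans hfx.symm) hne_x
          · exact h1
        have hjM : IsJunc M (d[i]'(by omega)).2 := by
          rcases (hsegM _ hgM).2 with h1 | h1
          · exact absurd (h1.trans hfx.symm) hne_x2
          · exact h1
        rw [hrel] at hjM
        exact no_cross hu hM hN hEW hx hjM hjN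
  intro g hg
  exact key g ((hmemd g).2 hg)

theorem cycles_agree {E : Finset (V × V)} {c₁ c₂ : List V}
    (hag : ∀ g₁ ∈ cyclicPairs c₁, ∀ g₂ ∈ cyclicPairs c₂, g₁.1 = g₂.1 → g₁ = g₂)
    {e : V × V} (he₁ : e ∈ cyclicPairs c₁) (he₂ : e ∈ cyclicPairs c₂) :
    ∀ g ∈ cyclicPairs c₁, g ∈ cyclicPairs c₂ := by
  obtain ⟨k, hk, hkf⟩ := List.getElem_of_mem he₁
  set c' := c₁.rotate k with hc'def
  have hd : cyclicPairs c' = (cyclicPairs c₁).rotate k := cp_rotate c₁ k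
  have hmemd : ∀ g, g ∈ cyclicPairs c' ↔ g ∈ cyclicPairs c₁ := by
    intro g; rw [hd]; exact List.mem_rotate
  have hd0 : ∀ (h : 0 < (cyclicPairs c').length), (cyclicPairs c')[0]'h = e := by
    intro h
    rw [List.getElem_of_eq hd, List.getElem_rotate]
    rw [getElem_congr _ _ k (by simpa using Nat.mod_eq_of_lt hk)
      (Nat.mod_lt _ (Nat.lt_of_le_of_lt (Nat.zero_le _) hk))]
    exact hkf
  have key : ∀ g ∈ cyclicPairs c', g ∈ cyclicPairs c₂ := by
    refine all_of_head ?_ ?_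
    · intro h
      rw [List.head_eq_getElem, hd0]
      exact he₂
    · intro i hi hgm
      set d := cyclicPairs c' with hddef
      have hrel : (d[i]'(by omega)).2 = (d[i+1]'hi).1 := by
        have := List.isChain_iff_getElem.1 (cp_chain' c') i (by omega)
        simpa using this
      have hsnd : (d[i]'(by omega)).2 ∈ c₂ := cp_mem_snd hgm
      obtain ⟨g₂, hg₂, hg₂1⟩ := cp_exists_out hsnd
      have hg' : (d[i+1]'hi) ∈ cyclicPairs c₁ := (hmemd _).1 (List.getElem_mem hi)
      have := hag _ hg' _ hg₂ (by rw [← hrel, hg₂1])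
      rw [this]
      exact hg₂
  intro g hg
  obtain ⟨i, hi, rfl⟩ := List.getElem_of_mem hg
  exact key _ ((hmemd _).2 (List.getElem_mem hi))

end EUaux
end

/-- In a loopless digraph with exactly one Eulerian tour up to cyclic shift, no two
distinct simple oriented cycles have an edge in common. -/
theorem unique_euler_cycles_edge_disjoint {V : Type*} [DecidableEq V]
    (E : Finset (V × V)) (hloop : Loopless E) (huniq : UniqueEulerTour E)
    (c₁ c₂ : List V) (h₁ : IsSimpleCycleList E c₁) (h₂ : IsSimpleCycleList E c₂)
    (e : V × V) (he₁ : e ∈ cyclicPairs c₁) (he₂ : e ∈ cyclicPairs c₂) :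
    (cyclicPairs c₁).toFinset = (cyclicPairs c₂).toFinset := by
  open EUaux in
  by_cases hag : ∀ g₁ ∈ cyclicPairs c₁, ∀ g₂ ∈ cyclicPairs c₂, g₁.1 = g₂.1 → g₁ = g₂
  · have h12 := EUaux.cycles_agree (E := E) hag he₁ he₂
    have h21 := EUaux.cycles_agree (E := E)
      (fun g₂ h2 g₁ hh1 h => (hag g₁ hh1 g₂ h2 h.symm).symm) he₂ he₁
    apply Finset.Subset.antisymm
    · intro a ha
      exact List.mem_toFinset.2 (h12 a (List.mem_toFinset.1 ha))
    · intro a ha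
      exact List.mem_toFinset.2 (h21 a (List.mem_toFinset.1 ha))
  · push_neg at hag
    obtain ⟨f₁, hf₁, f₂, hf₂, hff, hfne⟩ := hag
    exfalso
    obtain ⟨l₀, hl₀, -⟩ := id huniq
    have hEW₀ := EUaux.EW_of_tour hl₀
    have hf₁W₀ : f₁ ∈ cyclicPairs l₀ := by
      rw [← List.mem_toFinset, hl₀.2.2]; exact h₁.2.2 _ hf₁
    obtain ⟨k, hk, hkf⟩ := List.getElem_of_mem hf₁W₀
    set W := (cyclicPairs l₀).rotate k with hWdef
    have hEW : EUaux.EulerWord E W := EUaux.EW_rotate hEW₀ k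
    have hWne : W ≠ [] := hEW.1
    have hWpos : 0 < W.length := List.length_pos_iff.2 hWne
    have hW0 : W[0]'hWpos = f₁ := by
      rw [List.getElem_of_eq hWdef, List.getElem_rotate]
      rw [EUaux.getElem_congr _ _ k (by simpa using Nat.mod_eq_of_lt hk)
        (Nat.mod_lt _ (Nat.lt_of_le_of_lt (Nat.zero_le _) hk))]
      exact hkf
    have hf₂W : f₂ ∈ W := by
      rw [hWdef, List.mem_rotate, ← List.mem_toFinset, hl₀.2.2]
      exact h₂.2.2 _ hf₂
    obtain ⟨j, hj, hjf⟩ := List.getElem_of_mem hf₂W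
    have hj0 : j ≠ 0 := by
      intro h
      subst h
      exact hfne (by rw [← hW0, hjf])
    set M := W.take j with hMdef
    set N := W.drop j with hNdef
    have hMN : M ++ N = W := List.take_append_drop j W
    have hM : M ≠ [] := by
      apply List.ne_nil_of_length_pos
      simp [hMdef]
      omega
    have hN : N ≠ [] := by
      apply List.ne_nil_of_length_pos
      simp [hNdef]
      omega
    have hEWMN : EUaux.EulerWord E (M ++ N) := by rw [hMN]; exact hEW
    have hMhead : M.head hM = f₁ := by
      rw [List.head_eq_getElem, ← hW0]
      exact List.getElem_take ..
    have hNhead : N.head hN = f₂ := by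
      rw [List.head_eq_getElem, ← hjf]
      rw [List.getElem_drop]
      apply EUaux.getElem_congr
      omega
    have hx : (M.head hM).1 = (N.head hN).1 := by rw [hMhead, hNhead]; exact hff
    have heM : e ∈ M :=
      EUaux.cycle_stays huniq hM hN hEWMN hx h₁ hf₁
        (hMhead ▸ List.head_mem hM) (by rw [hMhead]) e he₁
    have hEW' : EUaux.EulerWord E (N ++ M) := by
      have := EUaux.EW_rotate hEWMN M.length
      rwa [List.rotate_append_length_eq] at this
    have heN : e ∈ N :=
      EUaux.cycle_stays huniq hN hM hEW' hx.symm h₂ hf₂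
        (hNhead ▸ List.head_mem hN) (by rw [hNhead]) e he₂
    exact (List.nodup_append.1 hEWMN.2.1).2.2 _ heM _ heN rfl
end

section
/- If a digraph D has an Eulerian tour that visits each vertex exactly twice, and this tour contains the pattern i →(walk a) j →(walk b) i →(walk c) j →(walk d) i with i ≠ j, then D has at least two distinct Eulerian tours up to cyclic shift (namely also i →a j →d i →c j →b i). Consequently, in a digraph with a unique Eulerian tour in which every vertex is visited exactly twice, the visit pattern of any two vertices is non-interlaced. -/
namespace InterlaceAux

variable {V : Type*}

def zipTo : List V → V → List (V × V)
  | [], _ => []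
  | [x], v => [(x, v)]
  | x :: y :: t, v => (x, y) :: zipTo (y :: t) v

lemma zipTo_eq : ∀ (l : List V) (v : V), zipTo l v = l.zip (l.tail ++ [v])
  | [], _ => rfl
  | [_], _ => rfl
  | x :: y :: t, v => by simp [zipTo, zipTo_eq (y :: t) v]

lemma zipTo_ne_nil (x : V) (l : List V) (v : V) : zipTo (x :: l) v ≠ [] := by
  cases l <;> simp [zipTo]

lemma zipTo_append_cons : ∀ (s : List V) (x : V) (t : List V) (v : V),
    zipTo (s ++ x :: t) v = zipTo s x ++ zipTo (x :: t) v
  | [], _, _, _ => rfl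
  | [_], _, _, _ => rfl
  | y :: z :: s₀, x, t, v => by
    show (y, z) :: zipTo (z :: s₀ ++ x :: t) v = (y, z) :: (zipTo (z :: s₀) x ++ zipTo (x :: t) v)
    exact congrArg _ (zipTo_append_cons (z :: s₀) x t v)

lemma zipTo_cons_append_cons (y : V) (s : List V) (x : V) (t : List V) (v : V) :
    zipTo (y :: (s ++ x :: t)) v = zipTo (y :: s) x ++ zipTo (x :: t) v := by
  rw [← List.cons_append, zipTo_append_cons]

lemma cyclicPairs_cons (x : V) (l : List V) :
    cyclicPairs (x :: l) = zipTo (x :: l) x := by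
  have h1 : (x :: l).rotate 1 = l ++ [x] := by
    rw [show (1:ℕ) = 0 + 1 from rfl, List.rotate_cons_succ, List.rotate_zero]
  rw [cyclicPairs, zipTo_eq, h1, List.tail_cons]

lemma cyclicPairs_four (i j : V) (a b c d : List V) :
    cyclicPairs (i :: a ++ j :: b ++ i :: c ++ j :: d) =
      zipTo (i :: a) j ++ zipTo (j :: b) i ++ zipTo (i :: c) j ++ zipTo (j :: d) i := by
  rw [show (i :: a ++ j :: b ++ i :: c ++ j :: d : List V)
      = i :: (a ++ j :: (b ++ i :: (c ++ j :: d))) from by simp,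
    cyclicPairs_cons, zipTo_cons_append_cons, zipTo_cons_append_cons, zipTo_cons_append_cons]
  simp [List.append_assoc]

lemma eq_of_append_cons_eq (x : V) (s : List V) : ∀ (s' t t' : List V), x ∉ s → x ∉ s' →
    s ++ x :: t = s' ++ x :: t' → s = s' ∧ t = t' := by
  induction s with
  | nil =>
    intro s' t t' _ hs' h
    cases s' with
    | nil => simpa using h
    | cons y s₀ =>
      simp only [List.nil_append, List.cons_append, List.cons.injEq] at h
      exact absurd (by simp [h.1] : x ∈ y :: s₀) hs'
  | cons y s₀ ih =>
    intro s' t t' hs hs' h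
    cases s' with
    | nil =>
      simp only [List.cons_append, List.nil_append, List.cons.injEq] at h
      exact absurd (by simp [h.1] : x ∈ y :: s₀) hs
    | cons z s₁ =>
      simp only [List.cons_append, List.cons.injEq] at h
      obtain ⟨rfl, h2⟩ := h
      have := ih s₁ t t' (fun hx => hs (List.mem_cons_of_mem _ hx))
        (fun hx => hs' (List.mem_cons_of_mem _ hx)) h2
      exact ⟨by rw [this.1], this.2⟩

end InterlaceAux

open InterlaceAux in
/-- If an Eulerian tour visiting every vertex exactly twice contains the interlaced
pattern `i →a j →b i →c j →d i` with `i ≠ j`, then swapping the walks `b` and `d`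
produces a second, genuinely different Eulerian tour. Consequently, in a digraph with a
unique Eulerian tour visiting every vertex exactly twice, no two vertices are
interlaced. -/
theorem interlaced_gives_second_tour {V : Type*} [DecidableEq V]
    (E : Finset (V × V)) (i j : V) (hij : i ≠ j) (a b c d : List V)
    (h : IsEulerTour E (i :: a ++ j :: b ++ i :: c ++ j :: d))
    (htwice : ∀ v ∈ (i :: a ++ j :: b ++ i :: c ++ j :: d),
      (i :: a ++ j :: b ++ i :: c ++ j :: d).count v = 2) :
    IsEulerTour E (i :: a ++ j :: d ++ i :: c ++ j :: b) ∧
      ¬ (i :: a ++ j :: d ++ i :: c ++ j :: b).IsRotated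
          (i :: a ++ j :: b ++ i :: c ++ j :: d) := by
  classical
  obtain ⟨-, hnodup, hE⟩ := h
  have hji : j ≠ i := Ne.symm hij
  -- occurrence facts
  have hcnti := htwice i (by simp)
  have hcntj := htwice j (by simp)
  simp only [List.count_cons, List.count_append, List.cons_append, beq_iff_eq,
    if_pos rfl, if_neg hij, if_neg hji, if_true, eq_self_iff_true] at hcnti hcntj
  have hia : i ∉ a := List.count_eq_zero.mp (by omega)
  have hib : i ∉ b := List.count_eq_zero.mp (by omega)
  have hic : i ∉ c := List.count_eq_zero.mp (by omega)
  have hid : i ∉ d := List.count_eq_zero.mp (by omega)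
  have hja : j ∉ a := List.count_eq_zero.mp (by omega)
  have hjb : j ∉ b := List.count_eq_zero.mp (by omega)
  have hjc : j ∉ c := List.count_eq_zero.mp (by omega)
  have hjd : j ∉ d := List.count_eq_zero.mp (by omega)
  have hQ := cyclicPairs_four i j a b c d
  have hP := cyclicPairs_four i j a d c b
  have hperm : (cyclicPairs (i :: a ++ j :: d ++ i :: c ++ j :: b)).Perm
      (cyclicPairs (i :: a ++ j :: b ++ i :: c ++ j :: d)) := by
    rw [hP, hQ]
    simp only [List.append_assoc]
    refine List.Perm.append_left _ ?_
    refine List.perm_append_comm.trans ?_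
    refine (List.perm_append_comm.append_right _).trans ?_
    rw [List.append_assoc]
  refine ⟨⟨by simp, hperm.symm.nodup hnodup, by
    rw [← hE]; exact List.toFinset_eq_of_perm _ _ hperm⟩, ?_⟩
  rintro ⟨n, hn⟩
  -- split the rotation
  have hNpos : 0 < (i :: a ++ j :: d ++ i :: c ++ j :: b).length := by simp
  have hmlt : n % (i :: a ++ j :: d ++ i :: c ++ j :: b).length
      < (i :: a ++ j :: d ++ i :: c ++ j :: b).length := Nat.mod_lt _ hNpos
  have hm : (i :: a ++ j :: d ++ i :: c ++ j :: b).rotate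
        (n % (i :: a ++ j :: d ++ i :: c ++ j :: b).length)
      = (i :: a ++ j :: b ++ i :: c ++ j :: d) := by rw [List.rotate_mod]; exact hn
  rw [List.rotate_eq_drop_append_take hmlt.le] at hm
  obtain ⟨u, w, huw, hsplit, hwne⟩ :
      ∃ u w, u ++ w = (i :: a ++ j :: d ++ i :: c ++ j :: b) ∧
        (i :: a ++ j :: b ++ i :: c ++ j :: d) = w ++ u ∧ w ≠ [] := by
    refine ⟨_, _, List.take_append_drop _ _, hm.symm, ?_⟩
    rw [Ne, List.drop_eq_nil_iff]
    omega
  cases w with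
  | nil => exact hwne rfl
  | cons z w₀ =>
    have hz : z = i := by
      have := hsplit
      simp only [List.cons_append, List.cons.injEq] at this
      exact this.1.symm
    rw [hz] at hsplit huw
    have htail : (a ++ j :: b ++ i :: c ++ j :: d : List V) = w₀ ++ u := by
      have := hsplit
      simp only [List.cons_append, List.cons.injEq] at this
      exact this.2
    cases u with
    | nil =>
      -- the two tours would be literally equal, forcing b = d, contradicting Nodup
      rw [List.nil_append] at huw
      rw [List.append_nil] at htail
      have hLL : (i :: a) ++ j :: (b ++ i :: (c ++ j :: d))
          = (i :: a) ++ j :: (d ++ i :: (c ++ j :: b)) := by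
        have h0 : (i :: a ++ j :: b ++ i :: c ++ j :: d : List V)
            = i :: a ++ j :: d ++ i :: c ++ j :: b := by
          rw [show (i :: a ++ j :: b ++ i :: c ++ j :: d : List V)
            = i :: (a ++ j :: b ++ i :: c ++ j :: d) from by simp, htail]
          exact huw
        simpa using h0
      have hmem : j ∉ (i :: a) := by simp [hji, hja]
      have h1 := (eq_of_append_cons_eq j (i :: a) (i :: a) _ _ hmem hmem hLL).2
      have hbd : b = d := (eq_of_append_cons_eq i b d _ _ hib hid h1).1
      rw [hQ] at hnodup
      simp only [List.append_assoc] at hnodup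
      have h2 := (List.nodup_append'.mp hnodup).2.1
      have hdisj := (List.nodup_append'.mp h2).2.2
      obtain ⟨e, he⟩ := List.exists_mem_of_ne_nil _ (zipTo_ne_nil j b i)
      refine hdisj he (List.mem_append_right _ ?_)
      rwa [← hbd]
    | cons y u₀ =>
      simp only [List.cons_append, List.cons.injEq] at huw
      obtain ⟨hy, htail'⟩ := huw
      rw [hy] at htail
      -- count of i in the common tail is 1
      have hone : (u₀ ++ i :: w₀).count i = 1 := by
        rw [htail']
        simp [List.count_append, List.count_cons, List.count_eq_zero.mpr hia,
          List.count_eq_zero.mpr hid, List.count_eq_zero.mpr hic,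
          List.count_eq_zero.mpr hib, hji]
      have hiu₀ : i ∉ u₀ := by
        rw [List.count_append, List.count_cons] at hone
        exact List.count_eq_zero.mp (by simp at hone; omega)
      have hiw₀ : i ∉ w₀ := by
        rw [List.count_append, List.count_cons] at hone
        exact List.count_eq_zero.mp (by simp at hone; omega)
      have heq1 : u₀ ++ i :: w₀ = (a ++ j :: d) ++ i :: (c ++ j :: b) := by
        simpa using htail'
      obtain ⟨hu₀, hw₀⟩ := eq_of_append_cons_eq i u₀ (a ++ j :: d) _ _ hiu₀
        (by simp [hia, hij, hid]) heq1
      -- now compare the first tour with the swapped decomposition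
      have heq2 : a ++ j :: (b ++ i :: (c ++ j :: d)) = c ++ j :: (b ++ i :: (a ++ j :: d)) := by
        have h3 := htail
        rw [hu₀, hw₀] at h3
        simpa using h3
      have hac : a = c := (eq_of_append_cons_eq j a c _ _ hja hjc heq2).1
      rw [hQ] at hnodup
      simp only [List.append_assoc] at hnodup
      have hdisj := (List.nodup_append'.mp hnodup).2.2
      obtain ⟨e, he⟩ := List.exists_mem_of_ne_nil _ (zipTo_ne_nil i a j)
      refine hdisj he (List.mem_append_right _ (List.mem_append_left _ ?_))
      rwa [← hac]
end
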